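/- arXiv:2105.00284 — 4 statements merged into one kernel-verified Lean document; each statement's English description precedes it below -/
import Mathlib

section
/- Let (Ω_n, F_n, P_n) be probability spaces with filtrations (F_{n,j})_{j=0}^{N_n}, and let X_{n,j} be nonnegative F_{n,j}-measurable random variables for 1 ≤ j ≤ N_n. If the sums S_n = Σ_{j=1}^{N_n} E_n[X_{n,j} | F_{n,j-1}] converge to 0 in P_n-probability as n → ∞, then the sums Σ_{j=1}^{N_n} X_{n,j} also converge to 0 in P_n-probability. -/
open MeasureTheory Filter

/-- Key deterministic lemma: partial sums of nonneg terms, truncated at first excess of δ. -/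
lemma aux_sum_indicator_le (c : ℕ → ℝ) (δ : ℝ) (hδ : 0 ≤ δ) :
    ∀ N : ℕ, (∀ j ∈ Finset.Icc 1 N, 0 ≤ c j) →
      ∑ j ∈ Finset.Icc 1 N, (if (∑ i ∈ Finset.Icc 1 j, c i) ≤ δ then c j else 0) ≤ δ := by
  intro N
  induction N with
  | zero => simpa using hδ
  | succ N ih =>
    intro hc
    have hsub : Finset.Icc 1 N ⊆ Finset.Icc 1 (N+1) := Finset.Icc_subset_Icc_right (by omega)
    rw [show Finset.Icc 1 (N+1) = insert (N+1) (Finset.Icc 1 N) by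
      ext k; simp [Finset.mem_Icc, Finset.mem_insert]; omega]
    rw [Finset.sum_insert (by simp)]
    by_cases h : (∑ i ∈ Finset.Icc 1 (N+1), c i) ≤ δ
    · have hall : ∀ j ∈ Finset.Icc 1 N, (if (∑ i ∈ Finset.Icc 1 j, c i) ≤ δ then c j else 0) = c j := by
        intro j hj
        rw [if_pos]
        refine le_trans (Finset.sum_le_sum_of_subset_of_nonneg ?_ ?_) h
        · exact Finset.Icc_subset_Icc_right (by simp at hj; omega)
        · intro i hi _; exact hc i hi
      rw [if_pos h, Finset.sum_congr rfl hall]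
      calc c (N+1) + ∑ j ∈ Finset.Icc 1 N, c j
          = ∑ i ∈ Finset.Icc 1 (N+1), c i := by
            rw [show Finset.Icc 1 (N+1) = insert (N+1) (Finset.Icc 1 N) by
              ext k; simp [Finset.mem_Icc, Finset.mem_insert]; omega, Finset.sum_insert (by simp)]
        _ ≤ δ := h
    · rw [if_neg h]
      simpa using ih (fun j hj => hc j (hsub hj))

/-- If the sums of conditional expectations of nonnegative adapted variables tend to 0
in probability, then so do the sums of the variables themselves. -/
theorem stmt_0
    (Ω : ℕ → Type*) [∀ n, MeasurableSpace (Ω n)]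
    (P : ∀ n, Measure (Ω n)) [∀ n, IsProbabilityMeasure (P n)]
    (N : ℕ → ℕ)
    (F : ∀ n, ℕ → MeasurableSpace (Ω n))
    (hF_mono : ∀ n, Monotone (F n))
    (hF_le : ∀ n j, F n j ≤ (inferInstance : MeasurableSpace (Ω n)))
    (X : ∀ n, ℕ → Ω n → ℝ)
    (hX_nonneg : ∀ n j ω, 0 ≤ X n j ω)
    (hX_meas : ∀ n, ∀ j ∈ Finset.Icc 1 (N n), Measurable[F n j] (X n j))
    (hX_int : ∀ n, ∀ j ∈ Finset.Icc 1 (N n), Integrable (X n j) (P n))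
    (hS : ∀ ε > (0:ℝ), Tendsto
      (fun n => P n {ω | ε ≤ ∑ j ∈ Finset.Icc 1 (N n), ((P n)[X n j | F n (j - 1)]) ω})
      atTop (nhds 0)) :
    ∀ ε > (0:ℝ), Tendsto
      (fun n => P n {ω | ε ≤ ∑ j ∈ Finset.Icc 1 (N n), X n j ω})
      atTop (nhds 0) := by
  intro ε hε
  rw [ENNReal.tendsto_nhds_zero]
  intro η hη
  set η' : ENNReal := min η 1 with hη'def
  have hη'pos : 0 < η' := lt_min hη zero_lt_one
  have hη'top : η' ≠ ⊤ := ne_top_of_le_ne_top (by norm_num) (min_le_right _ _)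
  have hη'tR : 0 < η'.toReal := ENNReal.toReal_pos hη'pos.ne' hη'top
  set δ : ℝ := ε * η'.toReal / 2 with hδdef
  have hδpos : 0 < δ := by positivity
  have key : ∀ n, P n {ω | ε ≤ ∑ j ∈ Finset.Icc 1 (N n), X n j ω}
      ≤ ENNReal.ofReal (δ / ε)
        + P n {ω | δ ≤ ∑ j ∈ Finset.Icc 1 (N n), ((P n)[X n j | F n (j - 1)]) ω} := by
    intro n
    set μ := P n with hμ
    set c : ℕ → Ω n → ℝ := fun j => μ[X n j | F n (j-1)] with hcdef
    set A : ℕ → Ω n → ℝ := fun k ω => ∑ i ∈ Finset.Icc 1 k, c i ω with hAdef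
    set G : ℕ → Set (Ω n) := fun j => {ω | A j ω ≤ δ} with hGdef
    have hA_sm : ∀ j, StronglyMeasurable[F n (j-1)] (A j) := by
      intro j
      apply Finset.stronglyMeasurable_fun_sum
      intro i hi
      exact stronglyMeasurable_condExp.mono (hF_mono n (by simp only [Finset.mem_Icc] at hi; omega))
    have hG_meas : ∀ j, MeasurableSet[F n (j-1)] (G j) := fun j =>
      measurableSet_le (hA_sm j).measurable measurable_const
    have hG_meas0 : ∀ j, MeasurableSet (G j) := fun j => hF_le n (j-1) _ (hG_meas j)
    set Y : Ω n → ℝ := fun ω => ∑ j ∈ Finset.Icc 1 (N n), (G j).indicator (X n j) ω with hYdef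
    have hY_int : Integrable Y μ :=
      integrable_finset_sum _ (fun j hj => (hX_int n j hj).indicator (hG_meas0 j))
    have hY_nonneg : ∀ ω, 0 ≤ Y ω := fun ω =>
      Finset.sum_nonneg (fun j _ => Set.indicator_nonneg (fun x _ => hX_nonneg n j x) ω)
    have hc_nonneg : ∀ᵐ ω ∂μ, ∀ j ∈ Finset.Icc 1 (N n), 0 ≤ c j ω := by
      rw [Filter.eventually_all_finset]
      intro j _
      exact condExp_nonneg (Filter.Eventually.of_forall (hX_nonneg n j))
    have hInt_le : ∫ ω, Y ω ∂μ ≤ δ := by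
      have h1 : ∫ ω, Y ω ∂μ = ∑ j ∈ Finset.Icc 1 (N n), ∫ ω in G j, X n j ω ∂μ := by
        rw [hYdef, integral_finset_sum _ (fun j hj => (hX_int n j hj).indicator (hG_meas0 j))]
        exact Finset.sum_congr rfl (fun j hj => integral_indicator (hG_meas0 j))
      have h2 : ∀ j ∈ Finset.Icc 1 (N n),
          ∫ ω in G j, X n j ω ∂μ = ∫ ω, (G j).indicator (c j) ω ∂μ := by
        intro j hj
        rw [integral_indicator (hG_meas0 j)]
        exact (setIntegral_condExp (hF_le n (j-1)) (hX_int n j hj) (hG_meas j)).symm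
      rw [h1, Finset.sum_congr rfl h2,
        ← integral_finset_sum _ (fun j _ => integrable_condExp.indicator (hG_meas0 j))]
      have hconst : ∫ _ : Ω n, (δ:ℝ) ∂μ = δ := by simp
      rw [← hconst]
      apply integral_mono_ae
        (integrable_finset_sum _ fun j _ => integrable_condExp.indicator (hG_meas0 j))
        (integrable_const δ)
      filter_upwards [hc_nonneg] with ω hω
      have hkey := aux_sum_indicator_le (fun i => c i ω) δ hδpos.le (N n) hω
      simp only [Set.indicator_apply, hGdef, Set.mem_setOf_eq]
      exact hkey
    have hMarkov : μ {ω | ε ≤ Y ω} ≤ ENNReal.ofReal (δ / ε) := by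
      have hm := mul_meas_ge_le_integral_of_nonneg
        (Filter.Eventually.of_forall hY_nonneg) hY_int ε
      have h3 : (μ {ω | ε ≤ Y ω}).toReal ≤ δ / ε := by
        rw [le_div_iff₀ hε]
        rw [measureReal_def] at hm
        nlinarith [hm, hInt_le]
      calc μ {ω | ε ≤ Y ω}
          = ENNReal.ofReal (μ {ω | ε ≤ Y ω}).toReal :=
            (ENNReal.ofReal_toReal (measure_ne_top μ _)).symm
        _ ≤ ENNReal.ofReal (δ/ε) := ENNReal.ofReal_le_ofReal h3
    have hincl : μ {ω | ε ≤ ∑ j ∈ Finset.Icc 1 (N n), X n j ω}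
        ≤ μ ({ω | ε ≤ Y ω} ∪ {ω | δ ≤ A (N n) ω}) := by
      apply measure_mono_ae
      filter_upwards [hc_nonneg] with ω hω hmem
      by_cases hA' : δ ≤ A (N n) ω
      · exact Or.inr hA'
      · left
        have hYeq : Y ω = ∑ j ∈ Finset.Icc 1 (N n), X n j ω := by
          apply Finset.sum_congr rfl
          intro j hj
          apply Set.indicator_of_mem
          show A j ω ≤ δ
          calc A j ω ≤ A (N n) ω :=
                Finset.sum_le_sum_of_subset_of_nonneg
                  (Finset.Icc_subset_Icc_right (by simp only [Finset.mem_Icc] at hj; omega))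
                  (fun i hi _ => hω i hi)
            _ ≤ δ := (lt_of_not_ge hA').le
        show ε ≤ Y ω
        rw [hYeq]; exact hmem
    calc μ {ω | ε ≤ ∑ j ∈ Finset.Icc 1 (N n), X n j ω}
        ≤ μ ({ω | ε ≤ Y ω} ∪ {ω | δ ≤ A (N n) ω}) := hincl
      _ ≤ μ {ω | ε ≤ Y ω} + μ {ω | δ ≤ A (N n) ω} := measure_union_le _ _
      _ ≤ ENNReal.ofReal (δ/ε) + μ {ω | δ ≤ A (N n) ω} := add_le_add_left hMarkov _
  have hofReal : ENNReal.ofReal (δ / ε) ≤ η' / 2 := by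
    have hde : δ / ε = η'.toReal / 2 := by
      rw [hδdef]; field_simp
    rw [hde, ENNReal.ofReal_div_of_pos (by norm_num), ENNReal.ofReal_toReal hη'top]
    norm_num
  have hEv : ∀ᶠ n in atTop,
      P n {ω | δ ≤ ∑ j ∈ Finset.Icc 1 (N n), ((P n)[X n j | F n (j - 1)]) ω} ≤ η'/2 :=
    (ENNReal.tendsto_nhds_zero.mp (hS δ hδpos)) (η'/2)
      (ENNReal.div_pos hη'pos.ne' (by norm_num))
  filter_upwards [hEv] with n hn
  calc P n {ω | ε ≤ ∑ j ∈ Finset.Icc 1 (N n), X n j ω}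
      ≤ ENNReal.ofReal (δ/ε)
        + P n {ω | δ ≤ ∑ j ∈ Finset.Icc 1 (N n), ((P n)[X n j | F n (j - 1)]) ω} := key n
    _ ≤ η'/2 + η'/2 := add_le_add hofReal hn
    _ = η' := ENNReal.add_halves _
    _ ≤ η := min_le_left _ _
end

section
/- Let (Ω, F, P) be a probability space with a finite filtration (F_j)_{j=0}^{N}, let X_j ≥ 0 be F_j-measurable and integrable, and for δ > 0 let A_{j,δ} = {Σ_{j'=1}^{j} E[X_{j'} | F_{j'-1}] ≤ δ}. Then E[Σ_{j=1}^{N} X_j · 1_{A_{N,δ}}] ≤ E[(Σ_{j=1}^{N} E[X_j | F_{j-1}]) ∧ δ]. -/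
open MeasureTheory

lemma aux_ptwise (δ : ℝ) (hδ : 0 ≤ δ) (N : ℕ) (y : ℕ → ℝ)
    (hy : ∀ j ∈ Finset.Icc 1 N, 0 ≤ y j) :
    ∑ j ∈ Finset.Icc 1 N, (if ∑ j' ∈ Finset.Icc 1 j, y j' ≤ δ then y j else 0)
      ≤ min (∑ j ∈ Finset.Icc 1 N, y j) δ := by
  induction N with
  | zero => simp [hδ]
  | succ n ih =>
    have hsub : Finset.Icc 1 n ⊆ Finset.Icc 1 (n+1) := by
      intro x hx; simp at hx ⊢; omega
    have ih' := ih (fun j hj => hy j (hsub hj))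
    have hbound : (∑ j ∈ Finset.Icc 1 n, if ∑ j' ∈ Finset.Icc 1 j, y j' ≤ δ then y j else 0)
        ≤ ∑ j ∈ Finset.Icc 1 n, y j := by
      gcongr with j hj
      split
      · exact le_refl _
      · exact hy j (hsub hj)
    rw [Finset.sum_Icc_succ_top (by omega), Finset.sum_Icc_succ_top (by omega)]
    by_cases h : ∑ k ∈ Finset.Icc 1 n, y k + y (n+1) ≤ δ
    · rw [if_pos h]
      refine le_min (by linarith) (by linarith)
    · rw [if_neg h, add_zero]
      refine ih'.trans (min_le_min ?_ le_rfl)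
      have := hy (n+1) (by simp)
      linarith

/-- Key estimate: the integral of the sum of nonnegative adapted variables over the event
where the sum of their conditional expectations is at most `δ` is bounded by the
expectation of the minimum of that sum with `δ`. -/
theorem stmt_2
    (Ω : Type*) [MeasurableSpace Ω] (P : Measure Ω) [IsProbabilityMeasure P]
    (N : ℕ) (F : ℕ → MeasurableSpace Ω)
    (hF_mono : Monotone F)
    (hF_le : ∀ j, F j ≤ (inferInstance : MeasurableSpace Ω))
    (X : ℕ → Ω → ℝ)
    (hX_nonneg : ∀ j ω, 0 ≤ X j ω)
    (hX_meas : ∀ j ∈ Finset.Icc 1 N, Measurable[F j] (X j))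
    (hX_int : ∀ j ∈ Finset.Icc 1 N, Integrable (X j) P)
    (δ : ℝ) (hδ : 0 < δ) :
    ∫ ω in {ω | ∑ j ∈ Finset.Icc 1 N, (P[X j | F (j - 1)]) ω ≤ δ},
        (∑ j ∈ Finset.Icc 1 N, X j ω) ∂P
      ≤ ∫ ω, min (∑ j ∈ Finset.Icc 1 N, (P[X j | F (j - 1)]) ω) δ ∂P := by
  set Y : ℕ → Ω → ℝ := fun j => P[X j | F (j - 1)] with hY
  set A : ℕ → Set Ω := fun j => {ω | ∑ j' ∈ Finset.Icc 1 j, Y j' ω ≤ δ} with hA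
  -- measurability of A j
  have hA_meas : ∀ j ∈ Finset.Icc 1 N, MeasurableSet[F (j - 1)] (A j) := by
    intro j hj
    have hsum : StronglyMeasurable[F (j - 1)] (fun ω => ∑ j' ∈ Finset.Icc 1 j, Y j' ω) := by
      refine Finset.stronglyMeasurable_fun_sum _ (fun j' hj' => ?_)
      exact (stronglyMeasurable_condExp).mono (hF_mono (by simp at hj'; omega))
    exact measurableSet_le hsum.measurable measurable_const
  have hA_meas' : ∀ j ∈ Finset.Icc 1 N, MeasurableSet (A j) :=
    fun j hj => hF_le (j - 1) _ (hA_meas j hj)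
  have hY_int : ∀ j, Integrable (Y j) P := fun j => integrable_condExp
  -- a.e. nonnegativity of Y j for j in range
  have hY0 : ∀ᵐ ω ∂P, ∀ j ∈ Finset.Icc 1 N, 0 ≤ Y j ω := by
    rw [Finset.eventually_all]
    intro j hj
    exact condExp_nonneg (Filter.Eventually.of_forall (hX_nonneg j))
  have hAN_le : ∀ j ∈ Finset.Icc 1 N, (A N : Set Ω) ≤ᵐ[P] A j := by
    intro j hj
    filter_upwards [hY0] with ω hω hmem
    simp only [hA, Set.mem_setOf_eq] at hmem ⊢
    refine le_trans (Finset.sum_le_sum_of_subset_of_nonneg ?_ (fun i hi _ => hω i hi)) hmem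
    intro x hx; simp at hx hj ⊢; omega
  calc ∫ ω in A N, (∑ j ∈ Finset.Icc 1 N, X j ω) ∂P
      = ∑ j ∈ Finset.Icc 1 N, ∫ ω in A N, X j ω ∂P :=
        integral_finset_sum _ (fun j hj => (hX_int j hj).integrableOn)
    _ ≤ ∑ j ∈ Finset.Icc 1 N, ∫ ω in A j, X j ω ∂P := by
        refine Finset.sum_le_sum (fun j hj => ?_)
        exact setIntegral_mono_set (hX_int j hj).integrableOn
          (Filter.Eventually.of_forall (fun ω => hX_nonneg j ω)) (hAN_le j hj)
    _ = ∑ j ∈ Finset.Icc 1 N, ∫ ω in A j, Y j ω ∂P := by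
        refine Finset.sum_congr rfl (fun j hj => ?_)
        exact (setIntegral_condExp (hF_le (j - 1)) (hX_int j hj) (hA_meas j hj)).symm
    _ = ∑ j ∈ Finset.Icc 1 N, ∫ ω, (A j).indicator (Y j) ω ∂P := by
        refine Finset.sum_congr rfl (fun j hj => ?_)
        rw [integral_indicator (hA_meas' j hj)]
    _ = ∫ ω, ∑ j ∈ Finset.Icc 1 N, (A j).indicator (Y j) ω ∂P :=
        (integral_finset_sum _ (fun j hj => (hY_int j).indicator (hA_meas' j hj))).symm
    _ ≤ ∫ ω, min (∑ j ∈ Finset.Icc 1 N, Y j ω) δ ∂P := by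
        refine integral_mono_ae
          (integrable_finset_sum _ (fun j hj => (hY_int j).indicator (hA_meas' j hj)))
          ((integrable_finset_sum _ (fun j _ => hY_int j)).inf (integrable_const δ)) ?_
        filter_upwards [hY0] with ω hω
        have := aux_ptwise δ hδ.le N (fun j => Y j ω) hω
        simpa [Set.indicator_apply, hA, Set.mem_setOf_eq] using this
end

section
/- Let (Ω, F, P) be a probability space, (F_{n,j})_{j=0}^{N_n} filtrations, and Y_{n,j} real random variables with Y_{n,j} measurable with respect to F_{n,j}. If for every ε > 0 the sums Σ_{j=1}^{N_n} P(|Y_{n,j}| > ε | F_{n,j-1}) converge to 0 in probability as n → ∞, then max_{1 ≤ j ≤ N_n} |Y_{n,j}| → 0 in probability. -/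
open MeasureTheory Filter

/-- Pointwise lemma: summing nonnegative increments only while the running sum is `< d`
gives a total that is at most the full sum and strictly less than `d`. -/
lemma stmt7_aux (g : ℕ → ℝ) (d : ℝ) (hd : 0 < d) :
    ∀ M : ℕ, (∀ i ∈ Finset.Icc 1 M, 0 ≤ g i) →
    (∑ j ∈ Finset.Icc 1 M, if (∑ i ∈ Finset.Icc 1 j, g i) < d then g j else 0) ≤
      (∑ i ∈ Finset.Icc 1 M, g i) ∧
    (∑ j ∈ Finset.Icc 1 M, if (∑ i ∈ Finset.Icc 1 j, g i) < d then g j else 0) < d := by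
  intro M
  induction M with
  | zero => simp [hd]
  | succ M ih =>
    intro hg
    have hg' : ∀ i ∈ Finset.Icc 1 M, 0 ≤ g i := fun i hi => by
      refine hg i ?_
      rw [Finset.mem_Icc] at hi ⊢
      omega
    obtain ⟨ih1, ih2⟩ := ih hg'
    have hnotmem : (M + 1) ∉ Finset.Icc 1 M := by simp
    have hins : Finset.Icc 1 (M + 1) = insert (M + 1) (Finset.Icc 1 M) := by
      ext x
      simp only [Finset.mem_Icc, Finset.mem_insert]
      omega
    have hgM : 0 ≤ g (M + 1) := hg (M + 1) (by simp)
    rw [hins, Finset.sum_insert hnotmem, Finset.sum_insert hnotmem]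
    by_cases h : (∑ i ∈ Finset.Icc 1 (M + 1), g i) < d
    · rw [if_pos h]
      rw [hins, Finset.sum_insert hnotmem] at h
      constructor
      · linarith
      · linarith
    · rw [if_neg h]
      constructor
      · linarith
      · linarith

/-- If the sums of conditional probabilities `P(|Y_{n,j}| > ε | F_{n,j-1})` tend to 0 in
probability for every `ε > 0`, then `max_j |Y_{n,j}| → 0` in probability. -/
theorem stmt_7
    (Ω : ℕ → Type*) [∀ n, MeasurableSpace (Ω n)]
    (P : ∀ n, Measure (Ω n)) [∀ n, IsProbabilityMeasure (P n)]
    (N : ℕ → ℕ)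
    (F : ∀ n, ℕ → MeasurableSpace (Ω n))
    (hF_mono : ∀ n, Monotone (F n))
    (hF_le : ∀ n j, F n j ≤ (inferInstance : MeasurableSpace (Ω n)))
    (Y : ∀ n, ℕ → Ω n → ℝ)
    (hY_meas : ∀ n, ∀ j ∈ Finset.Icc 1 (N n), Measurable[F n j] (Y n j))
    (hsum : ∀ ε > (0:ℝ), ∀ ε' > (0:ℝ), Tendsto
      (fun n => P n {ω | ε' ≤ ∑ j ∈ Finset.Icc 1 (N n),
        ((P n)[Set.indicator {ω' | ε < |Y n j ω'|} (fun _ => (1:ℝ)) | F n (j - 1)]) ω})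
      atTop (nhds 0)) :
    ∀ ε > (0:ℝ), Tendsto
      (fun n => P n {ω | ∃ j ∈ Finset.Icc 1 (N n), ε ≤ |Y n j ω|})
      atTop (nhds 0) := by
  intro ε hε
  rw [ENNReal.tendsto_nhds_zero]
  intro δ hδ
  set a : ℝ := ε / 2 with ha_def
  have ha : 0 < a := by positivity
  set d : ℝ := (min (δ / 2) 1).toReal with hd_def
  have hmin_ne_top : min (δ / 2) 1 ≠ ⊤ := by
    exact ne_top_of_le_ne_top (by norm_num) (min_le_right _ _)
  have hmin_pos : 0 < min (δ / 2) 1 := by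
    refine lt_min (ENNReal.half_pos hδ.ne') (by norm_num)
  have hd_pos : 0 < d := ENNReal.toReal_pos hmin_pos.ne' hmin_ne_top
  have h_ofReal : ENNReal.ofReal d ≤ δ / 2 := by
    rw [hd_def, ENNReal.ofReal_toReal hmin_ne_top]
    exact min_le_left _ _
  -- key per-n inequality
  have key : ∀ n, P n {ω | ∃ j ∈ Finset.Icc 1 (N n), ε ≤ |Y n j ω|}
      ≤ ENNReal.ofReal d + P n {ω | d ≤ ∑ j ∈ Finset.Icc 1 (N n),
        ((P n)[Set.indicator {ω' | a < |Y n j ω'|} (fun _ => (1:ℝ)) | F n (j - 1)]) ω} := by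
    intro n
    set f : ℕ → Ω n → ℝ :=
      fun j => Set.indicator {ω' | a < |Y n j ω'|} (fun _ => (1:ℝ)) with hf_def
    set g : ℕ → Ω n → ℝ := fun j => (P n)[f j | F n (j - 1)] with hg_def
    set S : ℕ → Ω n → ℝ := fun j ω => ∑ i ∈ Finset.Icc 1 j, g i ω with hS_def
    set B : ℕ → Set (Ω n) := fun j => {ω | S j ω < d} with hB_def
    set Z : Ω n → ℝ :=
      fun ω => ∑ j ∈ Finset.Icc 1 (N n), Set.indicator (B j) (f j) ω with hZ_def
    -- measurability and integrability facts
    have hYm : ∀ j ∈ Finset.Icc 1 (N n), Measurable (Y n j) := fun j hj =>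
      (hY_meas n j hj).mono (hF_le n j) le_rfl
    have hAmeas : ∀ j ∈ Finset.Icc 1 (N n), MeasurableSet {ω' | a < |Y n j ω'|} :=
      fun j hj => measurableSet_lt measurable_const (hYm j hj).abs
    have hf_nonneg : ∀ j ω, 0 ≤ f j ω := fun j ω =>
      Set.indicator_nonneg (fun _ _ => zero_le_one) ω
    have hf_int : ∀ j ∈ Finset.Icc 1 (N n), Integrable (f j) (P n) :=
      fun j hj => (integrable_const (1:ℝ)).indicator (hAmeas j hj)
    have hg_meas : ∀ j, StronglyMeasurable[F n (j - 1)] (g j) :=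
      fun j => stronglyMeasurable_condExp
    have hg_int : ∀ j, Integrable (g j) (P n) := fun j => integrable_condExp
    have hg_nonneg : ∀ᵐ ω ∂(P n), ∀ j, 0 ≤ g j ω :=
      ae_all_iff.mpr fun j =>
        condExp_nonneg (Eventually.of_forall (hf_nonneg j))
    have hS_meas : ∀ j, StronglyMeasurable[F n (j - 1)] (S j) := by
      intro j
      refine Finset.stronglyMeasurable_fun_sum _ fun i hi => ?_
      have hij : i - 1 ≤ j - 1 := by
        have := (Finset.mem_Icc.mp hi).2; omega
      exact (hg_meas i).mono (hF_mono n hij)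
    have hB_meas_m : ∀ j, MeasurableSet[F n (j - 1)] (B j) := fun j =>
      measurableSet_lt (hS_meas j).measurable measurable_const
    have hB_meas : ∀ j, MeasurableSet (B j) := fun j =>
      hF_le n (j - 1) _ (hB_meas_m j)
    -- Step B : Markov bound
    have hZ_int : Integrable Z (P n) := by
      refine integrable_finset_sum _ fun j hj => ?_
      exact (hf_int j hj).indicator (hB_meas j)
    have hZ_nonneg : ∀ ω, 0 ≤ Z ω := fun ω =>
      Finset.sum_nonneg fun j hj =>
        Set.indicator_nonneg (fun x _ => hf_nonneg j x) ω
    have hint_le : ∫ ω, Z ω ∂(P n) ≤ d := by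
      have h1 : ∫ ω, Z ω ∂(P n)
          = ∑ j ∈ Finset.Icc 1 (N n), ∫ ω in B j, f j ω ∂(P n) := by
        rw [hZ_def, integral_finset_sum _ fun j hj => (hf_int j hj).indicator (hB_meas j)]
        exact Finset.sum_congr rfl fun j hj => integral_indicator (hB_meas j)
      have h2 : ∀ j ∈ Finset.Icc 1 (N n),
          ∫ ω in B j, f j ω ∂(P n) = ∫ ω in B j, g j ω ∂(P n) := by
        intro j hj
        exact (setIntegral_condExp (hF_le n (j - 1)) (hf_int j hj) (hB_meas_m j)).symm
      have h3 : ∫ ω, Z ω ∂(P n)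
          = ∫ ω, (∑ j ∈ Finset.Icc 1 (N n), Set.indicator (B j) (g j) ω) ∂(P n) := by
        rw [h1, Finset.sum_congr rfl h2,
          integral_finset_sum _ fun j _ => (hg_int j).indicator (hB_meas j)]
        exact Finset.sum_congr rfl fun j hj => (integral_indicator (hB_meas j)).symm
      rw [h3]
      have hle : ∀ᵐ ω ∂(P n),
          (∑ j ∈ Finset.Icc 1 (N n), Set.indicator (B j) (g j) ω) ≤ d := by
        filter_upwards [hg_nonneg] with ω hω
        have := (stmt7_aux (fun i => g i ω) d hd_pos (N n)
          (fun i _ => hω i)).2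
        refine le_of_lt (lt_of_le_of_lt (le_of_eq ?_) this)
        refine Finset.sum_congr rfl fun j hj => ?_
        rw [Set.indicator_apply]
        rfl
      calc ∫ ω, (∑ j ∈ Finset.Icc 1 (N n), Set.indicator (B j) (g j) ω) ∂(P n)
          ≤ ∫ _ω, d ∂(P n) := by
            refine integral_mono_ae
              (integrable_finset_sum _ fun j _ => (hg_int j).indicator (hB_meas j))
              (integrable_const d) hle
        _ = d := by simp
    have hMarkov : P n {ω | 1 ≤ Z ω} ≤ ENNReal.ofReal d := by
      have := mul_meas_ge_le_integral_of_nonneg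
        (Eventually.of_forall hZ_nonneg) hZ_int 1
      rw [one_mul] at this
      refine (ENNReal.le_ofReal_iff_toReal_le (measure_ne_top _ _) hd_pos.le).mpr ?_
      exact this.trans hint_le
    -- Step A : a.e. inclusion
    have hincl : ∀ᵐ ω ∂(P n), ω ∈ {ω | ∃ j ∈ Finset.Icc 1 (N n), ε ≤ |Y n j ω|} →
        ω ∈ ({ω | 1 ≤ Z ω} ∪ {ω | d ≤ S (N n) ω} : Set (Ω n)) := by
      filter_upwards [hg_nonneg] with ω hω hmem
      by_cases hC : d ≤ S (N n) ω
      · exact Or.inr hC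
      push_neg at hC
      left
      obtain ⟨j, hj, hεj⟩ := hmem
      have hmemA : ω ∈ {ω' | a < |Y n j ω'|} := by
        simp only [Set.mem_setOf_eq, ha_def]
        linarith
      have hfj : f j ω = 1 := Set.indicator_of_mem hmemA _
      have hSj : S j ω ≤ S (N n) ω := by
        refine Finset.sum_le_sum_of_subset_of_nonneg
          (Finset.Icc_subset_Icc_right (Finset.mem_Icc.mp hj).2)
          (fun i _ _ => hω i)
      have hBj : ω ∈ B j := lt_of_le_of_lt hSj hC
      have : (1:ℝ) = Set.indicator (B j) (f j) ω := by
        rw [Set.indicator_of_mem hBj, hfj]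
      show (1:ℝ) ≤ Z ω
      rw [this]
      exact Finset.single_le_sum
        (fun i _ => Set.indicator_nonneg (fun x _ => hf_nonneg i x) ω) hj
    calc P n {ω | ∃ j ∈ Finset.Icc 1 (N n), ε ≤ |Y n j ω|}
        ≤ P n ({ω | 1 ≤ Z ω} ∪ {ω | d ≤ S (N n) ω}) := measure_mono_ae hincl
      _ ≤ P n {ω | 1 ≤ Z ω} + P n {ω | d ≤ S (N n) ω} := measure_union_le _ _
      _ ≤ ENNReal.ofReal d + P n {ω | d ≤ S (N n) ω} := by
          exact add_le_add_left hMarkov _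
  -- conclude using hsum
  have hsum' := ENNReal.tendsto_nhds_zero.mp (hsum a ha d hd_pos) (δ / 2)
    (ENNReal.half_pos hδ.ne')
  filter_upwards [hsum'] with n hn
  calc P n {ω | ∃ j ∈ Finset.Icc 1 (N n), ε ≤ |Y n j ω|}
      ≤ ENNReal.ofReal d + P n {ω | d ≤ ∑ j ∈ Finset.Icc 1 (N n),
        ((P n)[Set.indicator {ω' | a < |Y n j ω'|} (fun _ => (1:ℝ)) | F n (j - 1)]) ω} :=
        key n
    _ ≤ δ / 2 + δ / 2 := add_le_add h_ofReal hn
    _ = δ := ENNReal.add_halves δ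
end

section
/- Let (Ω, F, P) be a probability space with filtration (F_{n,j})_{j=0}^{N_n}, and let Y_{n,j} be square-integrable F_{n,j}-measurable random variables. If Σ_{j=1}^{N_n} E[(Y_{n,j} − E[Y_{n,j}|F_{n,j-1}])² | F_{n,j-1}] ≤ Σ_{j=1}^{N_n} E[Y_{n,j}² | F_{n,j-1}] almost surely, and the right-hand side converges to 0 in probability, then Σ_{j=1}^{N_n} (Y_{n,j} − E[Y_{n,j}|F_{n,j-1}]) → 0 in probability as n → ∞. -/
open MeasureTheory Filter
open scoped ENNReal NNReal

set_option maxHeartbeats 1000000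

lemma my_integrable_mul {α : Type*} [m0 : MeasurableSpace α] {μ : Measure α}
    {f g : α → ℝ} (hf : MemLp f 2 μ) (hg : MemLp g 2 μ) :
    Integrable (fun ω => f ω * g ω) μ := by
  have hpqr : (1:ℝ≥0∞) / 1 = 1 / 2 + 1 / 2 := by
    rw [ENNReal.div_add_div_same, one_div, inv_one]
    norm_num [ENNReal.div_self]
  have h : MemLp (f • g) 1 μ := by haveI : ENNReal.HolderTriple 2 2 1 := ⟨by rw [inv_one]; exact ENNReal.inv_two_add_inv_two⟩; exact hg.smul hf
  rw [memLp_one_iff_integrable] at h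
  exact h.congr (Eventually.of_forall fun ω => rfl)

lemma my_memℒp_condexp {α : Type*} {m m0 : MeasurableSpace α} {μ : Measure α}
    [IsFiniteMeasure μ] (hm : m ≤ m0)
    {f : α → ℝ} (hf : MemLp f 2 μ) : MemLp (μ[f|m]) 2 μ := by
  have hsf : SigmaFinite (μ.trim hm) := inferInstance
  set fL : Lp ℝ 2 μ := hf.toLp f with hfL
  have h1 : (condExpL2 ℝ ℝ hm fL : α → ℝ) =ᵐ[μ] μ[f|m] := by
    refine ae_eq_condExp_of_forall_setIntegral_eq hm (hf.integrable one_le_two)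
      (fun s _ _ => ((Lp.memLp _).integrable one_le_two).integrableOn)
      (fun s hs hμs => ?_) (aestronglyMeasurable_condExpL2 hm fL)
    rw [integral_condExpL2_eq hm fL hs hμs.ne]
    exact setIntegral_congr_ae (hm s hs) ((hf.coeFn_toLp).mono fun x hx _ => hx)
  exact (Lp.memLp _).ae_eq h1

theorem my_key {α : Type*} [m0 : MeasurableSpace α] {μ : Measure α} [IsProbabilityMeasure μ]
    (N : ℕ) (F : ℕ → MeasurableSpace α) (hmono : Monotone F) (hle : ∀ j, F j ≤ m0)
    (Y : ℕ → α → ℝ) (hmeas : ∀ j ∈ Finset.Icc 1 N, Measurable[F j] (Y j))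
    (hsq : ∀ j ∈ Finset.Icc 1 N, MemLp (Y j) 2 μ)
    {δ ε : ℝ} (hδ : 0 < δ) (hε : 0 < ε) :
    μ {ω | ε ≤ |∑ j ∈ Finset.Icc 1 N, (Y j ω - (μ[Y j | F (j-1)]) ω)|}
      ≤ μ {ω | δ ≤ ∑ j ∈ Finset.Icc 1 N, (μ[fun ω' => (Y j ω')^2 | F (j-1)]) ω}
        + ENNReal.ofReal (δ / ε^2) := by
  classical
  have h12 : (1:ℝ≥0∞) ≤ 2 := one_le_two
  -- abbreviations
  set W : ℕ → α → ℝ := fun j ω => Y j ω - (μ[Y j | F (j-1)]) ω with hWdef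
  set V : ℕ → α → ℝ := fun j => μ[fun ω' => (Y j ω')^2 | F (j-1)] with hVdef
  set T : ℕ → α → ℝ := fun k ω => ∑ j ∈ Finset.Icc 1 k, V j ω with hTdef
  set A : ℕ → Set α := fun j => {ω | T j ω ≤ δ} with hAdef
  set Z : ℕ → α → ℝ := fun j => (A j).indicator (W j) with hZdef
  -- basic facts
  have hg2 : ∀ j ∈ Finset.Icc 1 N, MemLp (μ[Y j | F (j-1)]) 2 μ :=
    fun j hj => my_memℒp_condexp (hle _) (hsq j hj)
  have hW2 : ∀ j ∈ Finset.Icc 1 N, MemLp (W j) 2 μ :=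
    fun j hj => (hsq j hj).sub (hg2 j hj)
  have hAm : ∀ j, MeasurableSet[F (j-1)] (A j) := by
    intro j
    have hT : Measurable[F (j-1)] (T j) := by
      apply Finset.measurable_sum
      intro i hi
      have hi' : F (i-1) ≤ F (j-1) := hmono (by have := Finset.mem_Icc.mp hi; omega)
      exact (stronglyMeasurable_condExp.measurable).mono hi' le_rfl
    exact hT measurableSet_Iic
  have hAm0 : ∀ j, MeasurableSet (A j) := fun j => hle _ _ (hAm j)
  have hZ2 : ∀ j ∈ Finset.Icc 1 N, MemLp (Z j) 2 μ :=
    fun j hj => (hW2 j hj).indicator (hAm0 j)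
  have hZsm : ∀ j ∈ Finset.Icc 1 N, StronglyMeasurable[F j] (Z j) := by
    intro j hj
    have h1 : StronglyMeasurable[F j] (W j) :=
      ((hmeas j hj).stronglyMeasurable).sub
        (stronglyMeasurable_condExp.mono (hmono (Nat.sub_le j 1)))
    exact h1.indicator ((hmono (Nat.sub_le j 1)) _ (hAm j))
  -- conditional expectation of W is zero
  have hWzero : ∀ j ∈ Finset.Icc 1 N, μ[W j | F (j-1)] =ᵐ[μ] 0 := by
    intro j hj
    have h1 : W j = Y j - μ[Y j | F (j-1)] := rfl
    rw [h1]
    refine (condExp_sub ((hsq j hj).integrable h12) integrable_condExp _).trans ?_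
    rw [condExp_of_stronglyMeasurable (hle _) stronglyMeasurable_condExp integrable_condExp]
    simp
  -- orthogonality
  have horth : ∀ j ∈ Finset.Icc 1 N, ∀ f : α → ℝ, StronglyMeasurable[F (j-1)] f →
      MemLp f 2 μ → ∫ ω, f ω * Z j ω ∂μ = 0 := by
    intro j hj f hfm hf2
    set c : α → ℝ := fun ω => f ω * (A j).indicator (fun _ => (1:ℝ)) ω with hc
    have hcm : StronglyMeasurable[F (j-1)] c :=
      hfm.mul (stronglyMeasurable_const.indicator (hAm j))
    have hkey : ∀ ω, f ω * Z j ω = (c * W j) ω := by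
      intro ω
      by_cases hω : ω ∈ A j <;>
        simp [hZdef, hc, Set.indicator_of_mem, Set.indicator_of_notMem, hω, Z]
    have hprod : Integrable (c * W j) μ := by
      have h1 : Integrable (fun ω => f ω * Z j ω) μ :=
        my_integrable_mul hf2 (hZ2 j hj)
      exact h1.congr (Eventually.of_forall hkey)
    have hWint : Integrable (W j) μ := (hW2 j hj).integrable h12
    have hpull := condExp_mul_of_stronglyMeasurable_left hcm hprod hWint
    have hzero : μ[c * W j | F (j-1)] =ᵐ[μ] 0 := by
      refine hpull.trans ?_
      filter_upwards [hWzero j hj] with ω hω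
      simp only [Pi.mul_apply, Pi.zero_apply] at hω ⊢
      rw [hω, mul_zero]
    calc ∫ ω, f ω * Z j ω ∂μ = ∫ ω, (c * W j) ω ∂μ :=
          integral_congr_ae (Eventually.of_forall hkey)
      _ = ∫ ω, (μ[c * W j | F (j-1)]) ω ∂μ := (integral_condExp (hle _)).symm
      _ = 0 := by rw [integral_congr_ae hzero]; simp
  -- second moment of partial sums
  have hsum : ∀ k, k ≤ N →
      ∫ ω, (∑ j ∈ Finset.Icc 1 k, Z j ω)^2 ∂μ = ∑ j ∈ Finset.Icc 1 k, ∫ ω, (Z j ω)^2 ∂μ := by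
    intro k
    induction k with
    | zero => intro _; simp
    | succ k ih =>
      intro hk
      have hk' : k ≤ N := by omega
      have hkm : k + 1 ∈ Finset.Icc 1 N := Finset.mem_Icc.mpr ⟨by omega, hk⟩
      have hS2 : MemLp (fun ω => ∑ j ∈ Finset.Icc 1 k, Z j ω) 2 μ :=
        memLp_finset_sum _ (fun j hj => hZ2 j (Finset.mem_Icc.mpr ⟨(Finset.mem_Icc.mp hj).1, (Finset.mem_Icc.mp hj).2.trans hk'⟩))
      have hSm : StronglyMeasurable[F k] (fun ω => ∑ j ∈ Finset.Icc 1 k, Z j ω) := by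
        refine Finset.stronglyMeasurable_fun_sum _ (fun j hj => ?_)
        have hjk : j ≤ k := (Finset.mem_Icc.mp hj).2
        exact (hZsm j (Finset.mem_Icc.mpr ⟨(Finset.mem_Icc.mp hj).1, hjk.trans hk'⟩)).mono
          (hmono hjk)
      have hSm' : StronglyMeasurable[F (k + 1 - 1)] (fun ω => ∑ j ∈ Finset.Icc 1 k, Z j ω) := by
        simpa using hSm
      have horth' := horth (k+1) hkm _ hSm' hS2
      have hZk2 := hZ2 (k+1) hkm
      have hexp : ∀ ω, (∑ j ∈ Finset.Icc 1 (k+1), Z j ω)^2 =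
          (∑ j ∈ Finset.Icc 1 k, Z j ω)^2 +
            (2 * ((∑ j ∈ Finset.Icc 1 k, Z j ω) * Z (k+1) ω) + (Z (k+1) ω)^2) := by
        intro ω
        rw [Finset.sum_Icc_succ_top (by omega : 1 ≤ k + 1)]
        ring
      have hintS : Integrable (fun ω => (∑ j ∈ Finset.Icc 1 k, Z j ω)^2) μ := hS2.integrable_sq
      have hintSZ : Integrable (fun ω => (∑ j ∈ Finset.Icc 1 k, Z j ω) * Z (k+1) ω) μ :=
        my_integrable_mul hS2 hZk2
      have hintZ2 : Integrable (fun ω => (Z (k+1) ω)^2) μ := hZk2.integrable_sq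
      calc ∫ ω, (∑ j ∈ Finset.Icc 1 (k+1), Z j ω)^2 ∂μ
          = ∫ ω, ((∑ j ∈ Finset.Icc 1 k, Z j ω)^2 +
              (2 * ((∑ j ∈ Finset.Icc 1 k, Z j ω) * Z (k+1) ω) + (Z (k+1) ω)^2)) ∂μ :=
            integral_congr_ae (Eventually.of_forall hexp)
        _ = ∫ ω, (∑ j ∈ Finset.Icc 1 k, Z j ω)^2 ∂μ +
              (2 * ∫ ω, (∑ j ∈ Finset.Icc 1 k, Z j ω) * Z (k+1) ω ∂μ +
                ∫ ω, (Z (k+1) ω)^2 ∂μ) := by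
            have hint23 : Integrable (fun ω => 2 * ((∑ j ∈ Finset.Icc 1 k, Z j ω) * Z (k+1) ω)
                + (Z (k+1) ω)^2) μ := (hintSZ.const_mul 2).add hintZ2
            have hint2 : Integrable (fun ω => 2 * ((∑ j ∈ Finset.Icc 1 k, Z j ω) * Z (k+1) ω)) μ :=
              hintSZ.const_mul 2
            rw [integral_add hintS hint23, integral_add hint2 hintZ2, integral_const_mul]
        _ = ∑ j ∈ Finset.Icc 1 k, ∫ ω, (Z j ω)^2 ∂μ + ∫ ω, (Z (k+1) ω)^2 ∂μ := by
            rw [horth', ih hk']; ring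
        _ = ∑ j ∈ Finset.Icc 1 (k+1), ∫ ω, (Z j ω)^2 ∂μ := by
            rw [Finset.sum_Icc_succ_top (by omega : 1 ≤ k + 1)]
  -- V nonneg a.e.
  have hVnn : ∀ᵐ ω ∂μ, ∀ j ∈ Finset.Icc 1 N, 0 ≤ V j ω := by
    rw [eventually_all_finset]
    intro j hj
    have h0 : (0:α → ℝ) ≤ᵐ[μ] V j := by
      rw [hVdef]
      exact condExp_nonneg (Eventually.of_forall fun ω => sq_nonneg _)
    filter_upwards [h0] with ω hω using hω
  -- pointwise stopping bound
  have hstop : ∀ᵐ ω ∂μ, ∑ j ∈ Finset.Icc 1 N, (A j).indicator (V j) ω ≤ δ := by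
    filter_upwards [hVnn] with ω hv
    have claim : ∀ k, k ≤ N →
        ∑ j ∈ Finset.Icc 1 k, (A j).indicator (V j) ω ≤ min (T k ω) δ := by
      intro k
      induction k with
      | zero =>
        intro _
        have hT0 : T 0 ω = 0 := by rw [hTdef]; simp
        simp [hT0, hδ.le]
      | succ k ih =>
        intro hk
        have hk' : k ≤ N := by omega
        have hVk : 0 ≤ V (k+1) ω := hv (k+1) (Finset.mem_Icc.mpr ⟨by omega, hk⟩)
        have hTstep : T (k+1) ω = T k ω + V (k+1) ω := by
          rw [hTdef]
          exact Finset.sum_Icc_succ_top (by omega) _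
        rw [Finset.sum_Icc_succ_top (by omega : 1 ≤ k+1)]
        by_cases hA1 : ω ∈ A (k+1)
        · have hTle : T (k+1) ω ≤ δ := hA1
          rw [Set.indicator_of_mem hA1]
          have h1 : ∑ j ∈ Finset.Icc 1 k, (A j).indicator (V j) ω ≤ T k ω :=
            (ih hk').trans (min_le_left _ _)
          have h2 : ∑ j ∈ Finset.Icc 1 k, (A j).indicator (V j) ω + V (k+1) ω ≤ T (k+1) ω := by
            rw [hTstep]; linarith
          exact h2.trans (le_min le_rfl hTle)
        · rw [Set.indicator_of_notMem hA1, add_zero]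
          refine (ih hk').trans (min_le_min ?_ le_rfl)
          rw [hTstep]; linarith
    exact (claim N le_rfl).trans (min_le_right _ _)
  -- bound on each E[Z j ^2]
  have hZsq_le : ∀ j ∈ Finset.Icc 1 N,
      ∫ ω, (Z j ω)^2 ∂μ ≤ ∫ ω, (A j).indicator (V j) ω ∂μ := by
    intro j hj
    have hYint : Integrable (Y j) μ := (hsq j hj).integrable h12
    have hg2j : MemLp (μ[Y j | F (j-1)]) 2 μ := hg2 j hj
    have hgsm : StronglyMeasurable[F (j-1)] (μ[Y j | F (j-1)]) := stronglyMeasurable_condExp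
    have e1 : ∀ ω, (Z j ω)^2 = (A j).indicator (fun ω' => (W j ω')^2) ω := by
      intro ω
      by_cases hω : ω ∈ A j <;>
        simp [hZdef, hω, Set.indicator_of_mem, Set.indicator_of_notMem, Z]
    have eZ : ∫ ω, (Z j ω)^2 ∂μ = ∫ ω in A j, (W j ω)^2 ∂μ := by
      rw [integral_congr_ae (Eventually.of_forall e1), integral_indicator (hAm0 j)]
    have eV : ∫ ω, (A j).indicator (V j) ω ∂μ = ∫ ω in A j, V j ω ∂μ :=
      integral_indicator (hAm0 j)
    rw [eZ, eV]
    -- the two key set-integral identities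
    have hgY_int : Integrable ((μ[Y j | F (j-1)]) * Y j) μ := my_integrable_mul hg2j (hsq j hj)
    have hpull := condExp_mul_of_stronglyMeasurable_left hgsm hgY_int hYint
    have hYg : ∫ ω in A j, Y j ω * (μ[Y j | F (j-1)]) ω ∂μ
        = ∫ ω in A j, ((μ[Y j | F (j-1)]) ω)^2 ∂μ := by
      calc ∫ ω in A j, Y j ω * (μ[Y j | F (j-1)]) ω ∂μ
          = ∫ ω in A j, ((μ[Y j | F (j-1)]) * Y j) ω ∂μ :=
            integral_congr_ae (Eventually.of_forall fun ω => by
              simp [Pi.mul_apply, mul_comm])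
        _ = ∫ ω in A j, (μ[(μ[Y j | F (j-1)]) * Y j | F (j-1)]) ω ∂μ :=
            (setIntegral_condExp (hle _) hgY_int (hAm j)).symm
        _ = ∫ ω in A j, ((μ[Y j | F (j-1)]) ω)^2 ∂μ := by
            refine integral_congr_ae (ae_restrict_of_ae ?_)
            filter_upwards [hpull] with ω hω
            rw [hω]
            simp [Pi.mul_apply, sq]
    have hY2A : ∫ ω in A j, (Y j ω)^2 ∂μ = ∫ ω in A j, V j ω ∂μ := by
      rw [hVdef]
      exact (setIntegral_condExp (hle _) (hsq j hj).integrable_sq (hAm j)).symm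
    have i1 : Integrable (fun ω => (Y j ω)^2) (μ.restrict (A j)) :=
      (hsq j hj).integrable_sq.integrableOn
    have i2 : Integrable (fun ω => Y j ω * (μ[Y j | F (j-1)]) ω) (μ.restrict (A j)) :=
      (my_integrable_mul (hsq j hj) hg2j).integrableOn
    have i3 : Integrable (fun ω => ((μ[Y j | F (j-1)]) ω)^2) (μ.restrict (A j)) :=
      hg2j.integrable_sq.integrableOn
    have hWexp : ∫ ω in A j, (W j ω)^2 ∂μ
        = ∫ ω in A j, (Y j ω)^2 ∂μ - 2 * ∫ ω in A j, Y j ω * (μ[Y j | F (j-1)]) ω ∂μ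
          + ∫ ω in A j, ((μ[Y j | F (j-1)]) ω)^2 ∂μ := by
      have i12 : Integrable (fun ω => (Y j ω)^2 - 2 * (Y j ω * (μ[Y j | F (j-1)]) ω))
          (μ.restrict (A j)) := i1.sub (i2.const_mul 2)
      have e2 : ∀ ω, (W j ω)^2 = (Y j ω)^2 - 2 * (Y j ω * (μ[Y j | F (j-1)]) ω)
          + ((μ[Y j | F (j-1)]) ω)^2 := by
        intro ω
        show (Y j ω - (μ[Y j | F (j-1)]) ω)^2 = _
        ring
      rw [integral_congr_ae (Eventually.of_forall e2), integral_add i12 i3,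
        integral_sub i1 (i2.const_mul 2), integral_const_mul]
    have hg_nonneg : 0 ≤ ∫ ω in A j, ((μ[Y j | F (j-1)]) ω)^2 ∂μ :=
      integral_nonneg fun ω => sq_nonneg _
    rw [hWexp, hYg, hY2A]
    linarith
  -- total second moment bound
  have hZint : ∫ ω, (∑ j ∈ Finset.Icc 1 N, Z j ω)^2 ∂μ ≤ δ := by
    rw [hsum N le_rfl]
    have hint : ∀ j ∈ Finset.Icc 1 N, Integrable ((A j).indicator (V j)) μ := by
      intro j hj
      have : Integrable (V j) μ := by rw [hVdef]; exact integrable_condExp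
      exact this.indicator (hAm0 j)
    refine (Finset.sum_le_sum hZsq_le).trans ?_
    rw [← integral_finset_sum _ hint]
    have := integral_mono_ae (integrable_finset_sum _ hint) (integrable_const δ) hstop
    refine this.trans ?_
    simp
  -- Chebyshev
  have hcheb : μ {ω | ε ≤ |∑ j ∈ Finset.Icc 1 N, Z j ω|} ≤ ENNReal.ofReal (δ / ε^2) := by
    have hSsq_int : Integrable (fun ω => (∑ j ∈ Finset.Icc 1 N, Z j ω)^2) μ :=
      (memLp_finset_sum _ (fun j hj => hZ2 j hj)).integrable_sq
    have hset : {ω | ε ≤ |∑ j ∈ Finset.Icc 1 N, Z j ω|}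
        = {ω | ε^2 ≤ (∑ j ∈ Finset.Icc 1 N, Z j ω)^2} := by
      ext ω
      simp only [Set.mem_setOf_eq]
      rw [← sq_abs (∑ j ∈ Finset.Icc 1 N, Z j ω)]
      exact (pow_le_pow_iff_left₀ hε.le (abs_nonneg _) two_ne_zero).symm
    rw [hset]
    have hmark := mul_meas_ge_le_integral_of_nonneg (μ := μ)
      (f := fun ω => (∑ j ∈ Finset.Icc 1 N, Z j ω)^2)
      (Eventually.of_forall fun ω => sq_nonneg _) hSsq_int (ε^2)
    have h2 : (μ {ω | ε^2 ≤ (∑ j ∈ Finset.Icc 1 N, Z j ω)^2}).toReal ≤ δ / ε^2 := by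
      rw [le_div_iff₀ (by positivity)]
      rw [measureReal_def] at hmark
      nlinarith [hmark, hZint]
    calc μ {ω | ε^2 ≤ (∑ j ∈ Finset.Icc 1 N, Z j ω)^2}
        = ENNReal.ofReal ((μ {ω | ε^2 ≤ (∑ j ∈ Finset.Icc 1 N, Z j ω)^2}).toReal) :=
          (ENNReal.ofReal_toReal (measure_ne_top _ _)).symm
      _ ≤ ENNReal.ofReal (δ / ε^2) := ENNReal.ofReal_le_ofReal h2
  -- inclusion
  have hTmono : ∀ᵐ ω ∂μ, ∀ j ∈ Finset.Icc 1 N, T j ω ≤ T N ω := by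
    filter_upwards [hVnn] with ω hv
    intro j hj
    rw [hTdef]
    refine Finset.sum_le_sum_of_subset_of_nonneg
      (Finset.Icc_subset_Icc_right (Finset.mem_Icc.mp hj).2) ?_
    intro i hi _
    exact hv i hi
  have hincl : μ {ω | ε ≤ |∑ j ∈ Finset.Icc 1 N, W j ω|} ≤
      μ {ω | δ ≤ T N ω} + μ {ω | ε ≤ |∑ j ∈ Finset.Icc 1 N, Z j ω|} := by
    refine le_trans (measure_mono_ae ?_) (measure_union_le _ _)
    filter_upwards [hTmono] with ω hmonoω hmem
    by_cases hT : T N ω ≤ δ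
    · right
      have hZW : ∀ j ∈ Finset.Icc 1 N, Z j ω = W j ω := by
        intro j hj
        have hωA : ω ∈ A j := by
          rw [hAdef]
          exact Set.mem_setOf_eq ▸ ((hmonoω j hj).trans hT)
        simp [hZdef, Set.indicator_of_mem hωA, Z]
      show ε ≤ |∑ j ∈ Finset.Icc 1 N, Z j ω|
      rw [Finset.sum_congr rfl hZW]
      exact hmem
    · left
      exact le_of_lt (lt_of_not_ge hT)
  exact hincl.trans (add_le_add le_rfl hcheb)

/-- Martingale-difference array law of large numbers: if the sums of conditional second
moments tend to 0 in probability, then the centered sums tend to 0 in probability. -/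
theorem stmt_10
    (Ω : ℕ → Type*) [∀ n, MeasurableSpace (Ω n)]
    (P : ∀ n, Measure (Ω n)) [∀ n, IsProbabilityMeasure (P n)]
    (N : ℕ → ℕ)
    (F : ∀ n, ℕ → MeasurableSpace (Ω n))
    (hF_mono : ∀ n, Monotone (F n))
    (hF_le : ∀ n j, F n j ≤ (inferInstance : MeasurableSpace (Ω n)))
    (Y : ∀ n, ℕ → Ω n → ℝ)
    (hY_meas : ∀ n, ∀ j ∈ Finset.Icc 1 (N n), Measurable[F n j] (Y n j))
    (hY_sq : ∀ n, ∀ j ∈ Finset.Icc 1 (N n), MemLp (Y n j) 2 (P n))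
    (hbound : ∀ n, ∀ᵐ ω ∂(P n),
      ∑ j ∈ Finset.Icc 1 (N n),
          ((P n)[fun ω' => (Y n j ω' - ((P n)[Y n j | F n (j - 1)]) ω') ^ 2 | F n (j - 1)]) ω
        ≤ ∑ j ∈ Finset.Icc 1 (N n), ((P n)[fun ω' => (Y n j ω') ^ 2 | F n (j - 1)]) ω)
    (hconv : ∀ ε > (0:ℝ), Tendsto
      (fun n => P n {ω | ε ≤ ∑ j ∈ Finset.Icc 1 (N n),
        ((P n)[fun ω' => (Y n j ω') ^ 2 | F n (j - 1)]) ω})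
      atTop (nhds 0)) :
    ∀ ε > (0:ℝ), Tendsto
      (fun n => P n {ω | ε ≤
        |∑ j ∈ Finset.Icc 1 (N n), (Y n j ω - ((P n)[Y n j | F n (j - 1)]) ω)|})
      atTop (nhds 0) := by
  intro ε hε
  rw [ENNReal.tendsto_nhds_zero]
  intro η hη
  set η' : ℝ≥0∞ := min η 1 with hη'def
  have hη'0 : η' ≠ 0 := (lt_min hη (by norm_num)).ne'
  have hη't : η' ≠ ⊤ := (lt_of_le_of_lt (min_le_right _ _) (by norm_num)).ne
  have hη'le : η' ≤ η := min_le_left _ _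
  have htR : 0 < η'.toReal := ENNReal.toReal_pos hη'0 hη't
  set δ : ℝ := ε^2 * (η'.toReal / 2) with hδdef
  have hδ0 : 0 < δ := by positivity
  have hkey := fun n => my_key (μ := P n) (N n) (F n) (hF_mono n) (hF_le n) (Y n)
    (hY_meas n) (hY_sq n) hδ0 hε
  have hofReal : ENNReal.ofReal (δ / ε^2) = η' / 2 := by
    have h1 : δ / ε^2 = η'.toReal / 2 := by
      rw [hδdef]; field_simp
    rw [h1, ENNReal.ofReal_div_of_pos (by norm_num), ENNReal.ofReal_toReal hη't]
    norm_num
  have hconv' := (ENNReal.tendsto_nhds_zero.mp (hconv δ hδ0)) (η'/2)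
    (ENNReal.div_pos hη'0 (by norm_num))
  filter_upwards [hconv'] with n hn
  calc P n {ω | ε ≤
        |∑ j ∈ Finset.Icc 1 (N n), (Y n j ω - ((P n)[Y n j | F n (j - 1)]) ω)|}
      ≤ P n {ω | δ ≤ ∑ j ∈ Finset.Icc 1 (N n),
          ((P n)[fun ω' => (Y n j ω') ^ 2 | F n (j - 1)]) ω} + ENNReal.ofReal (δ / ε^2) :=
        hkey n
    _ ≤ η' / 2 + η' / 2 := add_le_add hn (le_of_eq hofReal)
    _ = η' := ENNReal.add_halves _
    _ ≤ η := hη'le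
end
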